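/- The system of equations p_k(u_1^2,...,u_{N+l}^2) = p_k(\mu_1^2,...,\mu_N^2) for all k = 1,...,N+M-1, where 0 ≤ l ≤ M-1 and p_k denotes the k-th power sum, admits only trivial solutions: there is a subset of N of the variables u_j^2 equal (in some order) to \mu_1^2,...,\mu_N^2, and the remaining l variables u_k^2 are zero. -/

import Mathlib

open Finset Polynomial

/-- If two tuples have the same multiset of values, they differ by a permutation. -/
lemma exists_perm_comp {α : Type*} :
    ∀ {n : ℕ} (f g : Fin n → α),
      (univ.val.map f = univ.val.map g) → ∃ π : Equiv.Perm (Fin n), f = g ∘ π := by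
  intro n
  induction n with
  | zero =>
    intro f g _
    exact ⟨Equiv.refl _, funext fun i => i.elim0⟩
  | succ n ih =>
    intro f g hfg
    have h0 : f 0 ∈ univ.val.map g := by
      rw [← hfg]
      exact Multiset.mem_map_of_mem _ (Finset.mem_univ_val _)
    obtain ⟨j, -, hj⟩ := Multiset.mem_map.mp h0
    have hf : univ.val.map f = f 0 ::ₘ (univ.val.map (f ∘ Fin.succ)) := by
      rw [Fin.univ_succ, Finset.cons_val, Multiset.map_cons, Finset.map_val,
        Multiset.map_map]
      rfl
    have hg : univ.val.map g = g j ::ₘ (univ.val.map (g ∘ j.succAbove)) := by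
      rw [Fin.univ_succAbove n j, Finset.cons_val, Multiset.map_cons, Finset.map_val,
        Multiset.map_map]
      rfl
    have htail : univ.val.map (f ∘ Fin.succ) = univ.val.map (g ∘ j.succAbove) := by
      have : f 0 ::ₘ (univ.val.map (f ∘ Fin.succ)) =
          f 0 ::ₘ (univ.val.map (g ∘ j.succAbove)) := by
        rw [← hf, hfg, hg, hj]
      exact (Multiset.cons_inj_right _).mp this
    obtain ⟨π', hπ'⟩ := ih (f ∘ Fin.succ) (g ∘ j.succAbove) htail
    refine ⟨(finSuccEquiv n).trans ((Equiv.optionCongr π').trans (finSuccEquiv' j).symm), ?_⟩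
    funext i
    induction i using Fin.cases with
    | zero =>
      simp only [Function.comp_apply, Equiv.trans_apply, finSuccEquiv_zero,
        Equiv.optionCongr_apply, Option.map_none, finSuccEquiv'_symm_none]
      exact hj.symm
    | succ k =>
      simp only [Function.comp_apply, Equiv.trans_apply, finSuccEquiv_succ,
        Equiv.optionCongr_apply, Option.map_some, finSuccEquiv'_symm_some]
      exact congrFun hπ' k

/-- Equal power sums for `k = 1, …, n` imply equal multisets of values. -/
lemma multiset_eq_of_powersums {n : ℕ} (f g : Fin n → ℂ)
    (h : ∀ k : ℕ, 1 ≤ k → k ≤ n → ∑ i, f i ^ k = ∑ i, g i ^ k) :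
    univ.val.map f = univ.val.map g := by
  -- power sums of `f` and `g` agree in the relevant range, hence so do elementary
  -- symmetric functions, by Newton's identities.
  have hP : ∀ (φ : Fin n → ℂ) (k : ℕ),
      MvPolynomial.aeval φ (MvPolynomial.psum (Fin n) ℂ k) = ∑ i, φ i ^ k := by
    intro φ k
    simp [MvPolynomial.psum]
  have hesymm : ∀ k : ℕ, k ≤ n →
      (univ.val.map f).esymm k = (univ.val.map g).esymm k := by
    intro k
    induction k using Nat.strong_induction_on with
    | _ k ih =>
      intro hk
      rcases Nat.eq_zero_or_pos k with rfl | hk0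
      · simp [Multiset.esymm]
      · have hf := congrArg (MvPolynomial.aeval f)
          (MvPolynomial.mul_esymm_eq_sum (Fin n) ℂ k)
        have hg := congrArg (MvPolynomial.aeval g)
          (MvPolynomial.mul_esymm_eq_sum (Fin n) ℂ k)
        simp only [map_mul, map_sum, map_pow, map_neg, map_one, map_natCast,
          MvPolynomial.aeval_esymm_eq_multiset_esymm, hP] at hf hg
        have hsum :
            ∑ a ∈ (antidiagonal k).filter (fun a => a.1 < k),
              (-1 : ℂ) ^ a.1 * (univ.val.map f).esymm a.1 * ∑ i, f i ^ a.2 =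
            ∑ a ∈ (antidiagonal k).filter (fun a => a.1 < k),
              (-1 : ℂ) ^ a.1 * (univ.val.map g).esymm a.1 * ∑ i, g i ^ a.2 := by
          refine Finset.sum_congr rfl fun a ha => ?_
          simp only [Finset.mem_filter, Finset.HasAntidiagonal.mem_antidiagonal] at ha
          obtain ⟨hsumk, hlt⟩ := ha
          have h1 : a.1 ≤ n := le_trans (le_of_lt hlt) hk
          have h2 : 1 ≤ a.2 := by omega
          have h3 : a.2 ≤ n := by omega
          rw [ih a.1 hlt h1, h a.2 h2 h3]
        have hkne : (k : ℂ) ≠ 0 := Nat.cast_ne_zero.mpr (by omega)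
        apply mul_left_cancel₀ hkne
        rw [hf, hg, hsum]
  -- equal elementary symmetric functions imply same characteristic polynomial
  have hcf : Multiset.card (univ.val.map f) = n := by simp
  have hcg : Multiset.card (univ.val.map g) = n := by simp
  have hpoly : ((univ.val.map f).map fun a => X - C a).prod =
      ((univ.val.map g).map fun a => X - C a).prod := by
    ext k
    rcases le_or_gt k n with hk | hk
    · rw [Multiset.prod_X_sub_C_coeff _ (by rw [hcf]; exact hk),
        Multiset.prod_X_sub_C_coeff _ (by rw [hcg]; exact hk), hcf, hcg,
        hesymm (n - k) (Nat.sub_le _ _)]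
    · rw [Polynomial.coeff_eq_zero_of_natDegree_lt, Polynomial.coeff_eq_zero_of_natDegree_lt] <;>
        · rw [Polynomial.natDegree_multiset_prod_X_sub_C_eq_card]
          simpa using hk
  have := congrArg Polynomial.roots hpoly
  rwa [Polynomial.roots_multiset_prod_X_sub_C, Polynomial.roots_multiset_prod_X_sub_C] at this

/-- The system of power-sum equations
`p_k(u_1^2, …, u_{N+l}^2) = p_k(μ_1^2, …, μ_N^2)` for `k = 1, …, N+M-1`,
with `0 ≤ l ≤ M-1`, admits only trivial solutions: there is an injection
`σ : Fin N → Fin (N+l)` with `u_{σ j}^2 = μ_j^2` and all remaining `u_i^2 = 0`. -/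
theorem power_sum_system_trivial_solution
    (N M l : ℕ) (hM : 1 ≤ M) (hl : l ≤ M - 1)
    (u : Fin (N + l) → ℂ) (μ : Fin N → ℂ)
    (h : ∀ k : ℕ, 1 ≤ k → k ≤ N + M - 1 →
      ∑ j, (u j ^ 2) ^ k = ∑ j, (μ j ^ 2) ^ k) :
    ∃ σ : Fin N → Fin (N + l), Function.Injective σ ∧
      (∀ j, u (σ j) ^ 2 = μ j ^ 2) ∧
      (∀ i, i ∉ Set.range σ → u i ^ 2 = 0) := by
  have hnl : N + l ≤ N + M - 1 := by omega
  set v : Fin (N + l) → ℂ := fun i => u i ^ 2 with hv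
  set w : Fin (N + l) → ℂ := Fin.append (fun j => μ j ^ 2) (fun _ => (0 : ℂ)) with hwdef
  have hw : ∀ k : ℕ, 1 ≤ k → (∑ i, w i ^ k) = ∑ j, (μ j ^ 2) ^ k := by
    intro k hk
    rw [Fin.sum_univ_add]
    simp [hwdef, Fin.append_left, Fin.append_right, zero_pow (by omega : k ≠ 0)]
  have hms : univ.val.map v = univ.val.map w := by
    apply multiset_eq_of_powersums
    intro k h1 h2
    rw [hw k h1]
    exact h k h1 (le_trans h2 hnl)
  obtain ⟨π, hπ⟩ := exists_perm_comp v w hms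
  have hvw : ∀ x, v (π.symm x) = w x := by
    intro x
    rw [hπ]
    simp
  refine ⟨fun j => π.symm (Fin.castAdd l j), ?_, ?_, ?_⟩
  · intro a b hab
    have := π.symm.injective hab
    apply Fin.ext
    simpa using congrArg Fin.val this
  · intro j
    have := hvw (Fin.castAdd l j)
    rw [hwdef] at this
    simpa [Fin.append_left] using this
  · intro i hi
    by_cases hlt : (π i).val < N
    · exfalso
      apply hi
      refine ⟨⟨(π i).val, hlt⟩, ?_⟩
      have hc : Fin.castAdd l ⟨(π i).val, hlt⟩ = π i := by
        apply Fin.ext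
        simp
      show π.symm (Fin.castAdd l ⟨(π i).val, hlt⟩) = i
      rw [hc]
      simp
    · have hx : π i = Fin.natAdd N ⟨(π i).val - N, by omega⟩ := by
        apply Fin.ext
        simp
        omega
      have : v i = w (π i) := congrFun hπ i
      rw [hx, hwdef, Fin.append_right] at this
      exact this
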